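/- Let k be a field of characteristic zero, X a finite type equipped with a fixed-point-free involution c : X → X, and Σ a subset of X such that Σ and c(Σ) are disjoint with union X; let g = |Σ|. Fix a linear order on X, let V be the k-vector space with basis (e_x)_{x∈X}, and in Λ(V) set L = ∑_{σ∈Σ} e_σ ∧ e_{cσ}, writing e_S for the ordered wedge product over S ⊆ X. Let 2 ≤ i ≤ g, let I ⊆ Σ, J ⊆ c(Σ) with |I| + |J| = i, and let η be the unique element of Λ^{i-2}V with L^{g-i+2} ∧ η = L^{g-i+1} ∧ e_{I∪J} (such η exists and is unique by hard Lefschetz). If, for I' ⊆ Σ and J' ⊆ c(Σ) with |I'| + |J'| = i − 2, the coefficient of e_{I'∪J'} in η with respect to the basis {e_S : S ⊆ X, |S| = i−2} of Λ^{i-2}V is nonzero, then I \ c(J) = I' \ c(J') and J \ c(I) = J' \ c(I'). -/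

import Mathlib

/-- The basis vector `e_x` of `V = X → k` inside the exterior algebra `Λ(V)`. -/
noncomputable def eVec (k : Type*) {X : Type*} [Field k] [DecidableEq X] (x : X) :
    ExteriorAlgebra k (X → k) :=
  ExteriorAlgebra.ι k (Pi.single x 1)

/-- The ordered wedge product `e_S = ⋀_{x ∈ S} e_x` over a finite subset `S ⊆ X`,
taken in the fixed linear order on `X`. -/
noncomputable def eWedge (k : Type*) {X : Type*} [Field k] [LinearOrder X] (S : Finset X) :
    ExteriorAlgebra k (X → k) :=
  ((S.sort (· ≤ ·)).map (eVec k)).prod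

/-- The isotypic component `L_σ = e_σ ∧ e_{cσ}` of the Lefschetz class. -/
noncomputable def Lsigma (k : Type*) {X : Type*} [Field k] [DecidableEq X] (c : X → X) (σ : X) :
    ExteriorAlgebra k (X → k) :=
  eVec k σ * eVec k (c σ)

/-- The product `L_K = ∏_{σ ∈ K} L_σ` (the factors `L_σ` have even degree, hence commute,
so the ordered product represents the product). -/
noncomputable def LK (k : Type*) {X : Type*} [Field k] [LinearOrder X] (c : X → X)
    (K : Finset X) : ExteriorAlgebra k (X → k) :=
  ((K.sort (· ≤ ·)).map (Lsigma k c)).prod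

/-- The Lefschetz class `L = ∑_{σ ∈ Σ} L_σ = ∑_{σ ∈ Σ} e_σ ∧ e_{cσ}`. -/
noncomputable def Lef (k : Type*) {X : Type*} [Field k] [DecidableEq X] (c : X → X)
    (S : Finset X) : ExteriorAlgebra k (X → k) :=
  ∑ σ ∈ S, Lsigma k c σ

/-- helper: a sign in `k` -/
def IsSgn {k : Type*} [Field k] (ε : k) : Prop := ε = 1 ∨ ε = -1

section P1
variable {k X : Type*} [Field k] [LinearOrder X]

lemma IsSgn.ne_zero {ε : k} (h : IsSgn ε) : ε ≠ 0 := by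
  rcases h with h | h <;> simp [h]

lemma IsSgn.mul_self {ε : k} (h : IsSgn ε) : ε * ε = 1 := by
  rcases h with h | h <;> simp [h]

lemma IsSgn.mul {ε δ : k} (h : IsSgn ε) (h' : IsSgn δ) : IsSgn (ε * δ) := by
  rcases h with h | h <;> rcases h' with h' | h' <;> simp [IsSgn, h, h']

lemma IsSgn.one : IsSgn (1 : k) := Or.inl rfl

lemma IsSgn.neg {ε : k} (h : IsSgn ε) : IsSgn (-ε) := by
  rcases h with h | h <;> simp [IsSgn, h]

lemma eVec_sq (x : X) : eVec k x * eVec k x = 0 := ExteriorAlgebra.ι_sq_zero _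

lemma eVec_anticomm (x y : X) : eVec k x * eVec k y = -(eVec k y * eVec k x) := by
  have h := ExteriorAlgebra.ι_sq_zero (R := k) ((Pi.single x 1 + Pi.single y 1 : X → k))
  rw [map_add, add_mul, mul_add, mul_add] at h
  have hx := eVec_sq (k := k) x
  have hy := eVec_sq (k := k) y
  unfold eVec at hx hy
  rw [hx, hy, zero_add, add_zero] at h
  unfold eVec
  linear_combination (norm := noncomm_ring) h

/-- wedge of a list -/
noncomputable def eL (k : Type*) {X : Type*} [Field k] [DecidableEq X] (l : List X) :
    ExteriorAlgebra k (X → k) := (l.map (eVec k)).prod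

lemma eL_nil : eL k ([] : List X) = 1 := rfl

lemma eL_cons (x : X) (l : List X) : eL k (x :: l) = eVec k x * eL k l := by
  simp [eL]

lemma eWedge_eq_eL (T : Finset X) : eWedge k T = eL k (T.sort (· ≤ ·)) := rfl

lemma eVec_mul_eL_of_mem {x : X} {l : List X} (h : x ∈ l) : eVec k x * eL k l = 0 := by
  induction l with
  | nil => simp at h
  | cons a l ih =>
    rw [eL_cons, ← mul_assoc]
    rcases List.mem_cons.mp h with rfl | h
    · rw [eVec_sq, zero_mul]
    · rw [eVec_anticomm, neg_mul, mul_assoc, ih h, mul_zero, neg_zero]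

lemma eL_perm {l l' : List X} (h : l.Perm l') :
    ∃ ε : k, IsSgn ε ∧ eL k l = ε • eL k l' := by
  induction h with
  | nil => exact ⟨1, IsSgn.one, by simp⟩
  | cons a _ ih =>
    obtain ⟨ε, hε, he⟩ := ih
    exact ⟨ε, hε, by rw [eL_cons, he, eL_cons, mul_smul_comm]⟩
  | swap a b l =>
    refine ⟨-1, IsSgn.one.neg, ?_⟩
    rw [eL_cons, eL_cons, eL_cons, eL_cons, ← mul_assoc, ← mul_assoc,
      eVec_anticomm b a]
    simp
  | trans _ _ ih ih' =>
    obtain ⟨ε, hε, he⟩ := ih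
    obtain ⟨δ, hδ, he'⟩ := ih'
    exact ⟨ε * δ, hε.mul hδ, by rw [he, he', smul_smul]⟩

lemma sort_insert_perm {x : X} {T : Finset X} (hx : x ∉ T) :
    ((insert x T).sort (· ≤ ·)).Perm (x :: T.sort (· ≤ ·)) := by
  rw [← Multiset.coe_eq_coe]
  simp only [Multiset.cons_coe, Finset.sort_eq]
  rw [Finset.insert_val_of_notMem hx, ← Multiset.cons_coe, Finset.sort_eq]

lemma eVec_mul_eWedge_not_mem {x : X} {T : Finset X} (hx : x ∉ T) :
    ∃ ε : k, IsSgn ε ∧ eVec k x * eWedge k T = ε • eWedge k (insert x T) := by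
  obtain ⟨ε, hε, he⟩ := eL_perm (k := k) (sort_insert_perm hx).symm
  exact ⟨ε, hε, by rw [eWedge_eq_eL T, ← eL_cons, he, eWedge_eq_eL]⟩

lemma eVec_mul_eWedge_mem {x : X} {T : Finset X} (hx : x ∈ T) :
    eVec k x * eWedge k T = 0 :=
  eVec_mul_eL_of_mem ((Finset.mem_sort _).mpr hx)

end P1
section P2
variable {k X : Type*} [Field k] [LinearOrder X] {c : X → X}

lemma Lsigma_mul_eWedge_zero {σ : X} {T : Finset X} (h : σ ∈ T ∨ c σ ∈ T) :
    Lsigma k c σ * eWedge k T = 0 := by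
  unfold Lsigma
  by_cases hc : c σ ∈ T
  · rw [mul_assoc, eVec_mul_eWedge_mem hc, mul_zero]
  · rcases h with h | h
    · obtain ⟨ε, hε, he⟩ := eVec_mul_eWedge_not_mem (k := k) hc
      rw [mul_assoc, he, mul_smul_comm,
        eVec_mul_eWedge_mem (Finset.mem_insert_of_mem h), smul_zero]
    · exact absurd h hc

lemma Lsigma_mul_eWedge {σ : X} {T : Finset X} (hσ : σ ∉ T) (hcσ : c σ ∉ T)
    (hne : c σ ≠ σ) :
    ∃ ε : k, IsSgn ε ∧
      Lsigma k c σ * eWedge k T = ε • eWedge k (insert σ (insert (c σ) T)) := by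
  obtain ⟨ε₁, hε₁, he₁⟩ := eVec_mul_eWedge_not_mem (k := k) hcσ
  have hσ' : σ ∉ insert (c σ) T := by
    simp only [Finset.mem_insert]
    rintro (h | h)
    · exact hne h.symm
    · exact hσ h
  obtain ⟨ε₂, hε₂, he₂⟩ := eVec_mul_eWedge_not_mem (k := k) hσ'
  refine ⟨ε₂ * ε₁, hε₂.mul hε₁, ?_⟩
  rw [Lsigma, mul_assoc, he₁, mul_smul_comm, he₂, smul_smul, mul_comm ε₂ ε₁]

lemma Commute.lsigma_eVec (σ x : X) : Lsigma k c σ * eVec k x = eVec k x * Lsigma k c σ := by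
  have h1 := eVec_anticomm (k := k) (c σ) x
  have h2 := eVec_anticomm (k := k) σ x
  unfold Lsigma
  linear_combination (norm := noncomm_ring) eVec k σ * h1 - h2 * eVec k (c σ)

lemma Lsigma_comm (σ τ : X) : Commute (Lsigma k c σ) (Lsigma k c τ) := by
  have h1 := Commute.lsigma_eVec (k := k) (c := c) σ τ
  have h2 := Commute.lsigma_eVec (k := k) (c := c) σ (c τ)
  show Lsigma k c σ * Lsigma k c τ = Lsigma k c τ * Lsigma k c σ
  rw [show Lsigma k c τ = eVec k τ * eVec k (c τ) from rfl]
  linear_combination (norm := noncomm_ring) h1 * eVec k (c τ) + eVec k τ * h2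

lemma Lsigma_sq (σ : X) : Lsigma k c σ * Lsigma k c σ = 0 := by
  have h1 := eVec_anticomm (k := k) (c σ) σ
  have h2 : eVec k σ * eVec k σ = 0 := eVec_sq σ
  unfold Lsigma
  linear_combination (norm := noncomm_ring) eVec k σ * h1 * eVec k (c σ)
    - h2 * (eVec k (c σ) * eVec k (c σ))

private lemma pairwise_of_forall {α : Type*} {R : α → α → Prop} (h : ∀ a b, R a b) :
    ∀ l : List α, l.Pairwise R := by
  intro l; induction l with
  | nil => simp
  | cons a l ih => exact List.Pairwise.cons (fun b _ => h a b) ih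

lemma LK_empty : LK k c (∅ : Finset X) = 1 := by simp [LK]

lemma LK_insert {σ : X} {K : Finset X} (hσ : σ ∉ K) :
    LK k c (insert σ K) = Lsigma k c σ * LK k c K := by
  unfold LK
  rw [← List.prod_cons, ← List.map_cons]
  apply List.Perm.prod_eq'
  · exact (sort_insert_perm hσ).map _
  · exact List.Pairwise.map _ (fun a b h => h)
      (pairwise_of_forall (fun a b => Lsigma_comm (k := k) (c := c) a b) _)

lemma Commute.lsigma_LK (σ : X) (K : Finset X) :
    Commute (Lsigma k c σ) (LK k c K) := by
  unfold LK
  apply Commute.list_prod_right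
  intro y hy
  simp only [List.mem_map] at hy
  obtain ⟨τ, -, rfl⟩ := hy
  exact Lsigma_comm σ τ

end P2
section P3
variable {k X : Type*} [Field k] [LinearOrder X] {c : X → X}

set_option maxHeartbeats 1000000 in
lemma LK_mul_eWedge (hinv : Function.Involutive c) (hfree : ∀ x : X, c x ≠ x)
    {S : Finset X} (hdisj : Disjoint S (S.image c)) {K T : Finset X} (hK : K ⊆ S)
    (h1 : ∀ σ ∈ K, σ ∉ T) (h2 : ∀ σ ∈ K, c σ ∉ T) :
    ∃ ε : k, IsSgn ε ∧
      LK k c K * eWedge k T = ε • eWedge k (T ∪ K ∪ K.image c) := by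
  classical
  induction K using Finset.induction_on with
  | empty => exact ⟨1, IsSgn.one, by simp [LK_empty]⟩
  | @insert σ K hσK ih =>
    obtain ⟨ε, hε, he⟩ := ih (fun x hx => hK (Finset.mem_insert_of_mem hx))
      (fun x hx => h1 x (Finset.mem_insert_of_mem hx))
      (fun x hx => h2 x (Finset.mem_insert_of_mem hx))
    have hσS : σ ∈ S := hK (Finset.mem_insert_self σ K)
    have hσ1 : σ ∉ T ∪ K ∪ K.image c := by
      simp only [Finset.mem_union, Finset.mem_image, not_or]
      refine ⟨⟨h1 σ (Finset.mem_insert_self σ K), hσK⟩, ?_⟩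
      rintro ⟨τ, hτ, rfl⟩
      exact Finset.disjoint_left.mp hdisj hσS
        (Finset.mem_image.mpr ⟨τ, hK (Finset.mem_insert_of_mem hτ), rfl⟩)
    have hσ2 : c σ ∉ T ∪ K ∪ K.image c := by
      simp only [Finset.mem_union, Finset.mem_image, not_or]
      refine ⟨⟨h2 σ (Finset.mem_insert_self σ K), fun h =>
        Finset.disjoint_left.mp hdisj (hK (Finset.mem_insert_of_mem h))
          (Finset.mem_image.mpr ⟨σ, hσS, rfl⟩)⟩, ?_⟩
      rintro ⟨τ, hτ, hcτ⟩
      exact hσK (hinv.injective hcτ ▸ hτ)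
    obtain ⟨ε', hε', he'⟩ := Lsigma_mul_eWedge (k := k) hσ1 hσ2 (hfree σ)
    refine ⟨ε' * ε, hε'.mul hε, ?_⟩
    have hset : insert σ (insert (c σ) (T ∪ K ∪ K.image c)) =
        T ∪ insert σ K ∪ (insert σ K).image c := by
      rw [Finset.image_insert]
      ext x
      simp only [Finset.mem_insert, Finset.mem_union, Finset.mem_image]
      tauto
    rw [LK_insert hσK, mul_assoc, he, mul_smul_comm, he', smul_smul, mul_comm ε ε']
    rw [hset]

end P3

section P4
variable {k X : Type*} [Field k] [LinearOrder X]

/-- contraction by the coordinate functional at `x` -/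
noncomputable def ctr (k : Type*) {X : Type*} [Field k] [DecidableEq X] (x : X) :
    ExteriorAlgebra k (X → k) →ₗ[k] ExteriorAlgebra k (X → k) :=
  CliffordAlgebra.contractLeft (LinearMap.proj x)

lemma ctr_eVec_mul (x y : X) (w : ExteriorAlgebra k (X → k)) :
    ctr k x (eVec k y * w)
      = (if y = x then (1 : k) else 0) • w - eVec k y * ctr k x w := by
  rw [ctr, eVec, CliffordAlgebra.contractLeft_ι_mul]
  congr 2
  simp [LinearMap.proj, Pi.single_apply, eq_comm]

lemma ctr_one (x : X) : ctr k x (1 : ExteriorAlgebra k (X → k)) = 0 :=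
  CliffordAlgebra.contractLeft_one _ _

lemma ctr_eL_not_mem {x : X} {l : List X} (h : x ∉ l) : ctr k x (eL k l) = 0 := by
  induction l with
  | nil => exact ctr_one x
  | cons a l ih =>
    rw [eL_cons, ctr_eVec_mul,
      if_neg (fun hax => h (by rw [← hax]; exact List.mem_cons_self)),
      ih (fun hx => h (List.mem_cons_of_mem a hx)), mul_zero, zero_smul, zero_sub, neg_zero]

lemma ctr_eL_head {x : X} {l : List X} (h : x ∉ l) :
    ctr k x (eL k (x :: l)) = eL k l := by
  rw [eL_cons, ctr_eVec_mul, if_pos rfl, ctr_eL_not_mem h, mul_zero, one_smul, sub_zero]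

lemma ctr_eL_mem {x : X} {l : List X} (hnd : l.Nodup) (h : x ∈ l) :
    ∃ ε : k, IsSgn ε ∧ ctr k x (eL k l) = ε • eL k (l.erase x) := by
  induction l with
  | nil => simp at h
  | cons a l ih =>
    by_cases hax : a = x
    · subst hax
      exact ⟨1, IsSgn.one, by
        rw [ctr_eL_head (List.nodup_cons.mp hnd).1, List.erase_cons_head, one_smul]⟩
    · have hxl : x ∈ l := by
        rcases List.mem_cons.mp h with h' | h'
        · exact absurd h'.symm hax
        · exact h'
      obtain ⟨ε, hε, he⟩ := ih (List.nodup_cons.mp hnd).2 hxl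
      refine ⟨-ε, hε.neg, ?_⟩
      have herase : (a :: l).erase x = a :: l.erase x :=
        List.erase_cons_tail (by simp [hax])
      rw [eL_cons, ctr_eVec_mul, if_neg hax, he, zero_smul, zero_sub, mul_smul_comm,
        herase, eL_cons, neg_smul]

lemma sort_erase (T : Finset X) (x : X) :
    (T.erase x).sort (· ≤ ·) = (T.sort (· ≤ ·)).erase x := by
  refine (fun hp h1 h2 => List.Perm.eq_of_pairwise' h1 h2 hp) ?_ (Finset.pairwise_sort (T.erase x) (· ≤ ·))
    (List.Pairwise.sublist (List.erase_sublist (a := x)) (Finset.pairwise_sort T (· ≤ ·)))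
  rw [← Multiset.coe_eq_coe, Finset.sort_eq, ← Multiset.coe_erase, Finset.sort_eq,
    Finset.erase_val]

lemma ctr_eWedge_not_mem {x : X} {T : Finset X} (h : x ∉ T) :
    ctr k x (eWedge k T) = 0 :=
  ctr_eL_not_mem (fun hx => h ((Finset.mem_sort _).mp hx))

lemma ctr_eWedge_mem {x : X} {T : Finset X} (h : x ∈ T) :
    ∃ ε : k, IsSgn ε ∧ ctr k x (eWedge k T) = ε • eWedge k (T.erase x) := by
  obtain ⟨ε, hε, he⟩ := ctr_eL_mem (k := k) (Finset.sort_nodup T (· ≤ ·))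
    ((Finset.mem_sort (· ≤ ·)).mpr h)
  exact ⟨ε, hε, by rw [eWedge_eq_eL, he, eWedge_eq_eL, sort_erase]⟩

/-- iterated contraction along a list -/
noncomputable def ctrL (k : Type*) {X : Type*} [Field k] [DecidableEq X] (l : List X) :
    ExteriorAlgebra k (X → k) →ₗ[k] ExteriorAlgebra k (X → k) :=
  l.foldr (fun a φ => φ ∘ₗ ctr k a) LinearMap.id

lemma ctrL_nil : ctrL k ([] : List X) = LinearMap.id := rfl

lemma ctrL_cons (a : X) (l : List X) (z : ExteriorAlgebra k (X → k)) :
    ctrL k (a :: l) z = ctrL k l (ctr k a z) := rfl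

/-- the coefficient functional attached to `T` -/
noncomputable def lam (k : Type*) {X : Type*} [Field k] [LinearOrder X] (T : Finset X) :
    ExteriorAlgebra k (X → k) →ₗ[k] k :=
  (ExteriorAlgebra.algebraMapInv).toLinearMap ∘ₗ ctrL k (T.sort (· ≤ ·))

lemma algebraMapInv_eVec (x : X) :
    ExteriorAlgebra.algebraMapInv (eVec k x) = (0 : k) := by
  simp [eVec, ExteriorAlgebra.algebraMapInv]

lemma algebraMapInv_eWedge (T : Finset X) :
    ExteriorAlgebra.algebraMapInv (eWedge k T) = if T = ∅ then (1 : k) else 0 := by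
  by_cases hT : T = ∅
  · subst hT
    rw [if_pos rfl, eWedge_eq_eL, Finset.sort_empty, eL_nil, map_one]
  · rw [if_neg hT]
    have hs : T.sort (· ≤ ·) ≠ [] := by
      intro h
      have h2 := Finset.sort_toFinset T (· ≤ ·)
      rw [h] at h2
      exact hT (by simpa using h2.symm)
    obtain ⟨a, l, hl⟩ := List.exists_cons_of_ne_nil hs
    rw [eWedge_eq_eL, hl, eL_cons, map_mul, algebraMapInv_eVec, zero_mul]

lemma ctrL_eWedge_ne (l : List X) (T' : Finset X) (hne : l.toFinset ≠ T') :
    ExteriorAlgebra.algebraMapInv (ctrL k l (eWedge k T')) = (0 : k) := by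
  induction l generalizing T' with
  | nil =>
    rw [ctrL_nil, LinearMap.id_apply, algebraMapInv_eWedge, if_neg]
    intro h
    exact hne (by simp [h])
  | cons a l ih =>
    rw [ctrL_cons]
    by_cases ha : a ∈ T'
    · obtain ⟨ε, hε, he⟩ := ctr_eWedge_mem (k := k) ha
      rw [he, map_smul, map_smul, ih (T'.erase a) ?_, smul_zero]
      intro h
      apply hne
      have : insert a (l.toFinset) = insert a (T'.erase a) := by rw [h]
      rwa [Finset.insert_erase ha, ← List.toFinset_cons] at this
    · rw [ctr_eWedge_not_mem ha, map_zero, map_zero]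

lemma ctrL_sort_eWedge_self (T : Finset X) :
    ctrL k (T.sort (· ≤ ·)) (eWedge k T) = 1 := by
  induction T using Finset.strongInduction with
  | _ T ih =>
    by_cases hT : T = ∅
    · subst hT
      rw [Finset.sort_empty, ctrL_nil, LinearMap.id_apply, eWedge_eq_eL,
        Finset.sort_empty, eL_nil]
    · have hne : T.Nonempty := Finset.nonempty_of_ne_empty hT
      set a := T.min' hne with ha
      have hsort : T.sort (· ≤ ·) = a :: ((T.erase a).sort (· ≤ ·)) := by
        refine (fun hp h1 h2 => List.Perm.eq_of_pairwise' h1 h2 hp) ?_ (Finset.pairwise_sort T (· ≤ ·)) ?_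
        swap
        · rw [List.pairwise_cons]
          constructor
          · intro b hb
            exact T.min'_le b (Finset.mem_of_mem_erase ((Finset.mem_sort _).mp hb))
          · exact Finset.pairwise_sort _ _
        · rw [← Multiset.coe_eq_coe, Finset.sort_eq, ← Multiset.cons_coe, Finset.sort_eq,
            Finset.erase_val, Multiset.cons_erase (by exact_mod_cast T.min'_mem hne)]
      rw [hsort, ctrL_cons]
      have haerase : a ∉ (T.erase a).sort (· ≤ ·) := by
        rw [Finset.mem_sort]
        exact Finset.notMem_erase a T
      rw [eWedge_eq_eL, hsort, ctr_eL_head haerase, ← eWedge_eq_eL]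
      exact ih (T.erase a) (Finset.erase_ssubset (T.min'_mem hne))

lemma lam_eWedge (T T' : Finset X) :
    lam k T (eWedge k T') = if T' = T then (1 : k) else 0 := by
  by_cases h : T' = T
  · subst h
    rw [if_pos rfl, lam, LinearMap.comp_apply, ctrL_sort_eWedge_self,
      AlgHom.toLinearMap_apply]
    exact map_one ExteriorAlgebra.algebraMapInv
  · rw [if_neg h, lam, LinearMap.comp_apply, AlgHom.toLinearMap_apply]
    exact ctrL_eWedge_ne _ _ (by rw [Finset.sort_toFinset]; exact fun hh => h hh.symm)

end P4
section HL
variable {k : Type*} [Field k] {X : Type*} [DecidableEq X]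

/-- up operator on the boolean lattice of subsets of `M` -/
noncomputable def Uop (k : Type*) [Field k] {X : Type*} [DecidableEq X] (M : Finset X)
    (f : Finset X → k) : Finset X → k :=
  fun K => if K ⊆ M then ∑ σ ∈ K, f (K.erase σ) else 0

/-- down operator -/
noncomputable def Dop (k : Type*) [Field k] {X : Type*} [DecidableEq X] (M : Finset X)
    (f : Finset X → k) : Finset X → k :=
  fun K => ∑ σ ∈ M \ K, f (insert σ K)

/-- `f` is supported on `q`-element subsets of `M` -/
def Lev {k : Type*} [Field k] {X : Type*} [DecidableEq X] (M : Finset X) (q : ℕ)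
    (f : Finset X → k) : Prop :=
  ∀ K, f K ≠ 0 → K ⊆ M ∧ K.card = q

lemma Uop_zero (M : Finset X) : Uop k M (0 : Finset X → k) = 0 := by
  funext K; simp [Uop]

lemma Dop_zero (M : Finset X) : Dop k M (0 : Finset X → k) = 0 := by
  funext K; simp [Dop]

lemma Uop_add (M : Finset X) (f g : Finset X → k) :
    Uop k M (f + g) = Uop k M f + Uop k M g := by
  funext K
  simp only [Uop, Pi.add_apply]
  split
  · rw [Finset.sum_add_distrib]
  · rw [add_zero]

lemma Uop_smul (M : Finset X) (a : k) (f : Finset X → k) :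
    Uop k M (a • f) = a • Uop k M f := by
  funext K
  simp only [Uop, Pi.smul_apply, smul_eq_mul]
  split
  · rw [Finset.mul_sum]
  · rw [mul_zero]

lemma Uop_iter_zero (M : Finset X) (n : ℕ) : (Uop k M)^[n] (0 : Finset X → k) = 0 :=
  Function.iterate_fixed (Uop_zero M) n

lemma Lev_Uop {M : Finset X} {q : ℕ} {f : Finset X → k} (hf : Lev M q f) :
    Lev M (q + 1) (Uop k M f) := by
  intro K hK
  simp only [Uop] at hK
  split at hK
  · rename_i hKM
    obtain ⟨σ, hσK, hne⟩ := Finset.exists_ne_zero_of_sum_ne_zero hK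
    have h2 := (hf _ hne).2
    rw [Finset.card_erase_of_mem hσK] at h2
    have : 1 ≤ K.card := Finset.card_pos.mpr ⟨σ, hσK⟩
    exact ⟨hKM, by omega⟩
  · exact absurd rfl hK

lemma Lev_Uop_iter {M : Finset X} {q : ℕ} {f : Finset X → k} (hf : Lev M q f) (n : ℕ) :
    Lev M (q + n) ((Uop k M)^[n] f) := by
  induction n with
  | zero => simpa using hf
  | succ n ih =>
    rw [Function.iterate_succ_apply']
    have := Lev_Uop ih
    rwa [show q + n + 1 = q + (n + 1) by omega] at this

lemma Lev_Dop {M : Finset X} {q : ℕ} {f : Finset X → k} (hf : Lev M (q + 1) f) :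
    Lev M q (Dop k M f) := by
  intro K hK
  simp only [Dop] at hK
  obtain ⟨σ, hσ, hne⟩ := Finset.exists_ne_zero_of_sum_ne_zero hK
  rw [Finset.mem_sdiff] at hσ
  obtain ⟨h1, h2⟩ := hf _ hne
  rw [Finset.card_insert_of_notMem hσ.2] at h2
  exact ⟨(Finset.subset_insert σ K).trans h1, by omega⟩

lemma Dop_lev_zero {M : Finset X} {f : Finset X → k} (hf : Lev M 0 f) :
    Dop k M f = 0 := by
  funext K
  simp only [Dop, Pi.zero_apply]
  apply Finset.sum_eq_zero
  intro σ hσ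
  by_contra hne
  have := (hf _ hne).2
  simp [Finset.card_eq_zero] at this

/-- The fundamental commutation relation, pointwise. -/
lemma DU_sub_UD (M : Finset X) (f : Finset X → k)
    (hf : ∀ K, ¬ K ⊆ M → f K = 0) (K : Finset X) :
    Dop k M (Uop k M f) K - Uop k M (Dop k M f) K
      = ((M.card : k) - 2 * K.card) * f K := by
  classical
  by_cases hKM : K ⊆ M
  · have hDU : Dop k M (Uop k M f) K
        = ((M \ K).card : k) * f K + ∑ σ ∈ M \ K, ∑ τ ∈ K, f (insert σ (K.erase τ)) := by
      unfold Dop Uop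
      have hstep : ∀ σ ∈ M \ K,
          (if insert σ K ⊆ M then ∑ τ ∈ insert σ K, f ((insert σ K).erase τ) else 0)
            = f K + ∑ τ ∈ K, f (insert σ (K.erase τ)) := by
        intro σ hσ
        rw [Finset.mem_sdiff] at hσ
        rw [if_pos (Finset.insert_subset hσ.1 hKM), Finset.sum_insert hσ.2,
          Finset.erase_insert hσ.2]
        congr 1
        refine Finset.sum_congr rfl (fun τ hτ => ?_)
        rw [Finset.erase_insert_of_ne (fun h => hσ.2 (by rw [h]; exact hτ))]
      rw [Finset.sum_congr rfl hstep, Finset.sum_add_distrib, Finset.sum_const,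
        nsmul_eq_mul]
    have hUD : Uop k M (Dop k M f) K
        = (K.card : k) * f K + ∑ τ ∈ K, ∑ σ ∈ M \ K, f (insert σ (K.erase τ)) := by
      unfold Uop Dop
      rw [if_pos hKM]
      have hstep : ∀ τ ∈ K, (∑ σ ∈ M \ K.erase τ, f (insert σ (K.erase τ)))
          = f K + ∑ σ ∈ M \ K, f (insert σ (K.erase τ)) := by
        intro τ hτ
        have hMK : M \ K.erase τ = insert τ (M \ K) := by
          ext a
          simp only [Finset.mem_sdiff, Finset.mem_erase, Finset.mem_insert, not_and]
          by_cases h : a = τ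
          · subst h
            simp [hKM hτ]
          · simp [h]
        rw [hMK, Finset.sum_insert (by simp [Finset.mem_sdiff, hτ]),
          Finset.insert_erase hτ]
      rw [Finset.sum_congr rfl hstep, Finset.sum_add_distrib, Finset.sum_const, nsmul_eq_mul]
    rw [hDU, hUD, Finset.sum_comm]
    have hcard : ((M \ K).card : k) = (M.card : k) - K.card := by
      rw [Finset.card_sdiff_of_subset hKM]
      have := Finset.card_le_card hKM
      push_cast [Nat.cast_sub this]
      ring
    rw [hcard]
    ring
  · have h1 : Dop k M (Uop k M f) K = 0 := by
      unfold Dop Uop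
      apply Finset.sum_eq_zero
      intro σ hσ
      rw [if_neg (fun h => hKM ((Finset.subset_insert σ K).trans h))]
    have h2 : Uop k M (Dop k M f) K = 0 := by unfold Uop; rw [if_neg hKM]
    rw [h1, h2, hf K hKM, mul_zero, sub_zero]

lemma DU_sub_UD_lev {M : Finset X} {q : ℕ} {f : Finset X → k} (hf : Lev M q f) :
    Dop k M (Uop k M f) = Uop k M (Dop k M f) + (((M.card : k) - 2 * q) • f) := by
  funext K
  have h := DU_sub_UD M f (fun K hK => by
    by_contra hne
    exact hK (hf K hne).1) K
  simp only [Pi.add_apply, Pi.smul_apply, smul_eq_mul]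
  by_cases hfK : f K = 0
  · linear_combination h + (2 * (q : k) - 2 * (K.card : k)) * hfK
  · have hq := (hf K hfK).2
    rw [← hq]
    linear_combination h

lemma D_iter_U {M : Finset X} {q : ℕ} {f : Finset X → k} (hf : Lev M q f) (n : ℕ) :
    Dop k M ((Uop k M)^[n+1] f)
      = (Uop k M)^[n+1] (Dop k M f)
        + ((((n : k) + 1) * ((M.card : k) - 2 * q - n)) • (Uop k M)^[n] f) := by
  induction n with
  | zero =>
    have h := DU_sub_UD_lev hf
    rw [Function.iterate_one, Function.iterate_zero, id_eq, h]
    funext K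
    simp only [Pi.add_apply, Pi.smul_apply, smul_eq_mul]
    push_cast
    ring
  | succ n ih =>
    have hlev : Lev M (q + (n+1)) ((Uop k M)^[n+1] f) := Lev_Uop_iter hf (n+1)
    rw [Function.iterate_succ_apply' (Uop k M) (n+1) f, DU_sub_UD_lev hlev, ih,
      Uop_add, Uop_smul,
      ← Function.iterate_succ_apply' (Uop k M) (n+1) (Dop k M f),
      ← Function.iterate_succ_apply' (Uop k M) n f]
    funext K
    simp only [Pi.add_apply, Pi.smul_apply, smul_eq_mul]
    push_cast
    ring

theorem HL_inj [CharZero k] (M : Finset X) :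
    ∀ q n (f : Finset X → k), Lev M q f → 2 * q + n ≤ M.card →
      (Uop k M)^[n] f = 0 → f = 0 := by
  intro q
  induction q using Nat.strong_induction_on with
  | _ q ihq =>
    intro n
    induction n with
    | zero =>
      intro f _ _ h
      simpa using h
    | succ n ihn =>
      intro f hf hle hU
      have hU2 : (Uop k M)^[n+1+1] f = 0 := by
        rw [Function.iterate_succ_apply', hU]
        exact Uop_zero M
      have hDU := D_iter_U hf (n+1)
      rw [hU2, Dop_zero, hU, smul_zero, add_zero] at hDU
      have hDf : Dop k M f = 0 := by
        rcases q with _ | q'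
        · exact Dop_lev_zero hf
        · exact ihq q' (by omega) (n+1+1) (Dop k M f) (Lev_Dop hf) (by omega) hDU.symm
      have hID := D_iter_U hf n
      rw [hU, Dop_zero, hDf, Uop_iter_zero, zero_add] at hID
      have hc : (((n : k) + 1) * ((M.card : k) - 2 * q - n)) ≠ 0 := by
        have h1 : ((n : k) + 1) ≠ 0 := Nat.cast_add_one_ne_zero n
        have h2 : (M.card : k) - 2 * q - n ≠ 0 := by
          have he : (M.card : k) - 2 * q - n = ((M.card - (2 * q + n) : ℕ) : k) := by
            rw [Nat.cast_sub (by omega)]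
            push_cast
            ring
          rw [he]
          exact Nat.cast_ne_zero.mpr (by omega)
        exact mul_ne_zero h1 h2
      have hUn : (Uop k M)^[n] f = 0 := by
        rcases smul_eq_zero.mp hID.symm with h | h
        · exact absurd h hc
        · exact h
      exact ihn f hf (by omega) hUn

end HL
section P6

/-- reduced part of `T` -/
def rdc {X : Type*} [DecidableEq X] (c : X → X) (T : Finset X) : Finset X :=
  T.filter (fun x => c x ∉ T)

/-- paired part of `T` (on the `S` side) -/
def prc {X : Type*} [DecidableEq X] (c : X → X) (S T : Finset X) : Finset X :=
  S.filter (fun σ => σ ∈ T ∧ c σ ∈ T)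

/-- elements of `S` available relative to a reduced set `R` -/
def avl {X : Type*} [DecidableEq X] (c : X → X) (S R : Finset X) : Finset X :=
  S.filter (fun σ => σ ∉ R ∧ c σ ∉ R)

variable {X : Type*} [DecidableEq X] {c : X → X} {S : Finset X}

lemma avl_subset {R : Finset X} : avl c S R ⊆ S := Finset.filter_subset _ _

lemma avl_spec {R : Finset X} {σ : X} (h : σ ∈ avl c S R) :
    σ ∈ S ∧ σ ∉ R ∧ c σ ∉ R := by rwa [avl, Finset.mem_filter] at h

lemma avl_spec' {R : Finset X} {σ : X} (h1 : σ ∈ S) (h2 : σ ∉ R) (h3 : c σ ∉ R) :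
    σ ∈ avl c S R := by rw [avl, Finset.mem_filter]; exact ⟨h1, h2, h3⟩

lemma rdc_red (T : Finset X) : ∀ x ∈ rdc c T, c x ∉ rdc c T := by
  intro x hx hcx
  rw [rdc, Finset.mem_filter] at hx hcx
  exact hx.2 hcx.1

lemma prc_subset_avl (hinv : Function.Involutive c) (T : Finset X) :
    prc c S T ⊆ avl c S (rdc c T) := by
  intro σ hσ
  rw [prc, Finset.mem_filter] at hσ
  obtain ⟨hσS, hσT, hcσT⟩ := hσ
  refine avl_spec' hσS (fun h => ?_) (fun h => ?_)
  · rw [rdc, Finset.mem_filter] at h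
    exact h.2 hcσT
  · rw [rdc, Finset.mem_filter] at h
    exact h.2 (by rw [hinv σ]; exact hσT)

lemma rdc_union_prc [Fintype X] (hinv : Function.Involutive c)
    (hcover : S ∪ S.image c = Finset.univ) (T : Finset X) :
    rdc c T ∪ prc c S T ∪ (prc c S T).image c = T := by
  ext x
  simp only [Finset.mem_union, rdc, prc, Finset.mem_filter, Finset.mem_image]
  constructor
  · rintro ((⟨h, -⟩ | ⟨-, h, -⟩) | ⟨σ, ⟨-, -, h⟩, rfl⟩) <;> exact h
  · intro hx
    by_cases hcx : c x ∈ T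
    · by_cases hxS : x ∈ S
      · exact Or.inl (Or.inr ⟨hxS, hx, hcx⟩)
      · have hcxS : c x ∈ S := by
          have hx2 : x ∈ S ∪ S.image c := by rw [hcover]; exact Finset.mem_univ x
          rcases Finset.mem_union.mp hx2 with h | h
          · exact absurd h hxS
          · obtain ⟨σ, hσ, rfl⟩ := Finset.mem_image.mp h
            rw [hinv σ]
            exact hσ
        exact Or.inr ⟨c x, ⟨hcxS, hcx, show c (c x) ∈ T by rw [hinv x]; exact hx⟩, hinv x⟩
    · exact Or.inl (Or.inl ⟨hx, hcx⟩)

lemma rdc_of_union (hinv : Function.Involutive c) {R K : Finset X}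
    (hred : ∀ x ∈ R, c x ∉ R) (hK : K ⊆ avl c S R) :
    rdc c (R ∪ K ∪ K.image c) = R := by
  ext x
  simp only [rdc, Finset.mem_filter, Finset.mem_union, Finset.mem_image]
  constructor
  · rintro ⟨(hx | hx) | ⟨a, ha, rfl⟩, h2⟩
    · exact hx
    · exact (h2 (Or.inr ⟨x, hx, rfl⟩)).elim
    · exact (h2 (Or.inl (Or.inr (show c (c a) ∈ K by rw [hinv a]; exact ha)))).elim
  · intro hx
    refine ⟨Or.inl (Or.inl hx), ?_⟩
    rintro ((h | h) | ⟨a, ha, hca⟩)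
    · exact hred x hx h
    · exact (avl_spec (hK h)).2.2 (show c (c x) ∈ R by rw [hinv x]; exact hx)
    · exact (avl_spec (hK ha)).2.1 (show a ∈ R by rw [hinv.injective hca]; exact hx)

lemma prc_of_union (hinv : Function.Involutive c) (hdisj : Disjoint S (S.image c))
    {R K : Finset X} (hred : ∀ x ∈ R, c x ∉ R) (hK : K ⊆ avl c S R) :
    prc c S (R ∪ K ∪ K.image c) = K := by
  ext σ
  simp only [prc, Finset.mem_filter, Finset.mem_union, Finset.mem_image]
  constructor
  · rintro ⟨hσS, (hσ | hσ) | ⟨τ, hτ, hcτ⟩, hcσ⟩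
    · exfalso
      rcases hcσ with (h | h) | ⟨τ, hτ, hcτ⟩
      · exact hred σ hσ h
      · exact (avl_spec (hK h)).2.2 (show c (c σ) ∈ R by rw [hinv σ]; exact hσ)
      · exact (avl_spec (hK hτ)).2.1 (show τ ∈ R by rw [hinv.injective hcτ]; exact hσ)
    · exact hσ
    · exfalso
      exact Finset.disjoint_left.mp hdisj hσS
        (Finset.mem_image.mpr ⟨τ, (avl_spec (hK hτ)).1, hcτ⟩)
  · intro hσ
    exact ⟨(avl_spec (hK hσ)).1, Or.inl (Or.inr hσ), Or.inr ⟨σ, hσ, rfl⟩⟩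

lemma card_union_triple (hinv : Function.Involutive c) (hdisj : Disjoint S (S.image c))
    {R K : Finset X} (hK : K ⊆ avl c S R) :
    (R ∪ K ∪ K.image c).card = R.card + 2 * K.card := by
  have hd1 : Disjoint R K := by
    rw [Finset.disjoint_right]
    exact fun σ hσ => (avl_spec (hK hσ)).2.1
  have hd2 : Disjoint (R ∪ K) (K.image c) := by
    rw [Finset.disjoint_right]
    rintro x hx
    obtain ⟨τ, hτ, rfl⟩ := Finset.mem_image.mp hx
    rw [Finset.mem_union]
    rintro (h | h)
    · exact (avl_spec (hK hτ)).2.2 h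
    · exact Finset.disjoint_left.mp hdisj ((avl_spec (hK h)).1)
        (Finset.mem_image.mpr ⟨τ, (avl_spec (hK hτ)).1, rfl⟩)
  rw [Finset.card_union_of_disjoint hd2, Finset.card_union_of_disjoint hd1,
    Finset.card_image_of_injective _ hinv.injective]
  ring

lemma card_avl [Fintype X] (hinv : Function.Involutive c)
    (hdisj : Disjoint S (S.image c)) (hcover : S ∪ S.image c = Finset.univ)
    {R : Finset X} (hred : ∀ x ∈ R, c x ∉ R) :
    (avl c S R).card + R.card = S.card := by
  have hsub : avl c S R ⊆ S := avl_subset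
  have hbij : R.card = (S \ avl c S R).card := by
    apply Finset.card_bij (fun x _ => if x ∈ S then x else c x)
    · intro x hx
      by_cases hxS : x ∈ S
      · rw [if_pos hxS, Finset.mem_sdiff]
        exact ⟨hxS, fun h => (avl_spec h).2.1 hx⟩
      · have hcxS : c x ∈ S := by
          have hx2 : x ∈ S ∪ S.image c := by rw [hcover]; exact Finset.mem_univ x
          rcases Finset.mem_union.mp hx2 with h | h
          · exact absurd h hxS
          · obtain ⟨σ, hσ, rfl⟩ := Finset.mem_image.mp h
            rw [hinv σ]
            exact hσ
        rw [if_neg hxS, Finset.mem_sdiff]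
        exact ⟨hcxS, fun h => (avl_spec h).2.2 (show c (c x) ∈ R by rw [hinv x]; exact hx)⟩
    · intro x hx y hy hxy
      by_cases hxS : x ∈ S <;> by_cases hyS : y ∈ S
      · rwa [if_pos hxS, if_pos hyS] at hxy
      · rw [if_pos hxS, if_neg hyS] at hxy
        exact absurd (show c x ∈ R by rw [hxy, hinv]; exact hy) (hred x hx)
      · rw [if_neg hxS, if_pos hyS] at hxy
        exact absurd (show c y ∈ R by rw [← hxy, hinv]; exact hx) (hred y hy)
      · rw [if_neg hxS, if_neg hyS] at hxy
        exact hinv.injective hxy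
    · intro σ hσ
      rw [Finset.mem_sdiff] at hσ
      obtain ⟨hσS, hσavl⟩ := hσ
      have hor : σ ∈ R ∨ c σ ∈ R := by
        by_contra h
        push_neg at h
        exact hσavl (avl_spec' hσS h.1 h.2)
      rcases hor with hσR | hcσR
      · exact ⟨σ, hσR, by rw [if_pos hσS]⟩
      · have hcσS : c σ ∉ S := fun h =>
          Finset.disjoint_left.mp hdisj h (Finset.mem_image.mpr ⟨σ, hσS, rfl⟩)
        exact ⟨c σ, hcσR, by rw [if_neg hcσS, hinv]⟩
  rw [hbij, add_comm]
  exact Finset.card_sdiff_add_card_eq_card hsub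

end P6
section P7
variable {k X : Type*} [Field k] [LinearOrder X] {c : X → X} {S : Finset X}

lemma Lef_mul_LK_eW (hinv : Function.Involutive c)
    {R K : Finset X} (hK : K ⊆ avl c S R) :
    Lef k c S * (LK k c K * eWedge k R)
      = ∑ σ ∈ avl c S R \ K, LK k c (insert σ K) * eWedge k R := by
  classical
  rw [Lef, Finset.sum_mul]
  rw [← Finset.sum_subset ((Finset.sdiff_subset).trans (avl_subset (c := c) (R := R)))
    (fun σ hσS hσ => ?_)]
  · refine Finset.sum_congr rfl (fun σ hσ => ?_)
    rw [Finset.mem_sdiff] at hσ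
    rw [LK_insert hσ.2, mul_assoc]
  · -- vanishing for σ ∈ S not in avl \ K
    by_cases hσK : σ ∈ K
    · rw [← Finset.insert_erase hσK, LK_insert (Finset.notMem_erase σ K)]
      have : Lsigma k c σ * (Lsigma k c σ * LK k c (K.erase σ) * eWedge k R)
          = (Lsigma k c σ * Lsigma k c σ) * (LK k c (K.erase σ) * eWedge k R) := by
        noncomm_ring
      rw [this, Lsigma_sq, zero_mul]
    · have hor : σ ∈ R ∨ c σ ∈ R := by
        rw [Finset.mem_sdiff] at hσ
        by_contra hcon
        push_neg at hcon
        exact hσ ⟨avl_spec' hσS hcon.1 hcon.2, hσK⟩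
      rw [← mul_assoc, (Commute.lsigma_LK σ K).eq, mul_assoc,
        Lsigma_mul_eWedge_zero hor, mul_zero]

lemma Lef_mul_sum (hinv : Function.Involutive c)
    (R : Finset X) (w : Finset X → k) :
    Lef k c S * (∑ K ∈ (avl c S R).powerset, w K • (LK k c K * eWedge k R))
      = ∑ K ∈ (avl c S R).powerset,
          Uop k (avl c S R) w K • (LK k c K * eWedge k R) := by
  classical
  rw [Finset.mul_sum]
  have hL : ∀ K ∈ (avl c S R).powerset,
      Lef k c S * (w K • (LK k c K * eWedge k R))
        = ∑ σ ∈ avl c S R \ K, w K • (LK k c (insert σ K) * eWedge k R) := by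
    intro K hK
    rw [mul_smul_comm, Lef_mul_LK_eW hinv (Finset.mem_powerset.mp hK), Finset.smul_sum]
  rw [Finset.sum_congr rfl hL]
  have hR : ∀ K ∈ (avl c S R).powerset,
      Uop k (avl c S R) w K • (LK k c K * eWedge k R)
        = ∑ τ ∈ K, w (K.erase τ) • (LK k c K * eWedge k R) := by
    intro K hK
    rw [Uop, if_pos (Finset.mem_powerset.mp hK), Finset.sum_smul]
  rw [Finset.sum_congr rfl hR]
  rw [Finset.sum_sigma', Finset.sum_sigma']
  refine Finset.sum_nbij' (fun x => ⟨insert x.2 x.1, x.2⟩) (fun y => ⟨y.1.erase y.2, y.2⟩)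
    ?_ ?_ ?_ ?_ ?_
  · rintro ⟨K, σ⟩ hx
    rw [Finset.mem_sigma] at hx ⊢
    obtain ⟨hK, hσ⟩ := hx
    rw [Finset.mem_sdiff] at hσ
    exact ⟨Finset.mem_powerset.mpr
      (Finset.insert_subset hσ.1 (Finset.mem_powerset.mp hK)), Finset.mem_insert_self _ _⟩
  · rintro ⟨K, τ⟩ hy
    rw [Finset.mem_sigma] at hy ⊢
    obtain ⟨hK, hτ⟩ := hy
    refine ⟨Finset.mem_powerset.mpr ((Finset.erase_subset _ _).trans
      (Finset.mem_powerset.mp hK)), ?_⟩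
    rw [Finset.mem_sdiff]
    exact ⟨Finset.mem_powerset.mp hK hτ, Finset.notMem_erase _ _⟩
  · rintro ⟨K, σ⟩ hx
    rw [Finset.mem_sigma] at hx
    have hσ := hx.2
    rw [Finset.mem_sdiff] at hσ
    simp only [Sigma.mk.inj_iff]
    exact ⟨by rw [Finset.erase_insert hσ.2], HEq.rfl⟩
  · rintro ⟨K, τ⟩ hy
    rw [Finset.mem_sigma] at hy
    simp only [Sigma.mk.inj_iff]
    exact ⟨by rw [Finset.insert_erase hy.2], HEq.rfl⟩
  · rintro ⟨K, σ⟩ hx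
    rw [Finset.mem_sigma] at hx
    have hσ := hx.2
    rw [Finset.mem_sdiff] at hσ
    simp only
    rw [Finset.erase_insert hσ.2]

lemma Lef_pow_mul_sum (hinv : Function.Involutive c)
    (R : Finset X) (w : Finset X → k) (n : ℕ) :
    Lef k c S ^ n * (∑ K ∈ (avl c S R).powerset, w K • (LK k c K * eWedge k R))
      = ∑ K ∈ (avl c S R).powerset,
          ((Uop k (avl c S R))^[n] w) K • (LK k c K * eWedge k R) := by
  induction n generalizing w with
  | zero => simp
  | succ n ih =>
    rw [pow_succ, mul_assoc, Lef_mul_sum hinv, ih, ← Function.iterate_succ_apply]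

end P7
section P8
variable {k X : Type*} [Field k] [LinearOrder X] {c : X → X} {S : Finset X}

lemma eWedge_decomp [Fintype X] (hinv : Function.Involutive c) (hfree : ∀ x : X, c x ≠ x)
    (hdisj : Disjoint S (S.image c)) (hcover : S ∪ S.image c = Finset.univ) (T : Finset X) :
    ∃ ε : k, IsSgn ε ∧
      eWedge k T = ε • (LK k c (prc c S T) * eWedge k (rdc c T)) := by
  have h1 : ∀ σ ∈ prc c S T, σ ∉ rdc c T := by
    intro σ hσ hσ'
    rw [prc, Finset.mem_filter] at hσ
    rw [rdc, Finset.mem_filter] at hσ'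
    exact hσ'.2 hσ.2.2
  have h2 : ∀ σ ∈ prc c S T, c σ ∉ rdc c T := by
    intro σ hσ hσ'
    rw [prc, Finset.mem_filter] at hσ
    rw [rdc, Finset.mem_filter] at hσ'
    exact hσ'.2 (by rw [hinv σ]; exact hσ.2.1)
  obtain ⟨ε, hε, he⟩ := LK_mul_eWedge (k := k) hinv hfree hdisj
    (show prc c S T ⊆ S from Finset.filter_subset _ _) h1 h2
  rw [rdc_union_prc hinv hcover] at he
  exact ⟨ε, hε, by rw [he, smul_smul, hε.mul_self, one_smul]⟩

lemma lam_LK_eW_ne (hinv : Function.Involutive c) (hfree : ∀ x : X, c x ≠ x)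
    (hdisj : Disjoint S (S.image c)) {R K : Finset X} (T' : Finset X)
    (hred : ∀ x ∈ R, c x ∉ R) (hK : K ⊆ avl c S R) (hne : R ≠ rdc c T') :
    lam k T' (LK k c K * eWedge k R) = 0 := by
  obtain ⟨ε, hε, he⟩ := LK_mul_eWedge (k := k) hinv hfree hdisj (hK.trans avl_subset)
    (fun σ hσ => (avl_spec (hK hσ)).2.1) (fun σ hσ => (avl_spec (hK hσ)).2.2)
  rw [he, map_smul, lam_eWedge, if_neg, smul_zero]
  intro h
  exact hne (by rw [← h, rdc_of_union hinv hred hK])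

lemma lam_LK_eW_diag (hinv : Function.Involutive c) (hfree : ∀ x : X, c x ≠ x)
    (hdisj : Disjoint S (S.image c)) {R K K' : Finset X}
    (hred : ∀ x ∈ R, c x ∉ R) (hK : K ⊆ avl c S R) (hK' : K' ⊆ avl c S R) :
    ∃ ε : k, IsSgn ε ∧ lam k (R ∪ K' ∪ K'.image c) (LK k c K * eWedge k R)
      = if K = K' then ε else 0 := by
  obtain ⟨ε, hε, he⟩ := LK_mul_eWedge (k := k) hinv hfree hdisj (hK.trans avl_subset)
    (fun σ hσ => (avl_spec (hK hσ)).2.1) (fun σ hσ => (avl_spec (hK hσ)).2.2)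
  refine ⟨ε, hε, ?_⟩
  rw [he, map_smul, lam_eWedge]
  by_cases h : K = K'
  · subst h
    rw [if_pos rfl, if_pos rfl, smul_eq_mul, mul_one]
  · rw [if_neg, if_neg h, smul_zero]
    intro heq
    exact h (by rw [← prc_of_union hinv hdisj hred hK, heq,
      prc_of_union hinv hdisj hred hK'])

lemma reduced_parts [Fintype X] (hinv : Function.Involutive c)
    (hdisj : Disjoint S (S.image c)) {I₁ J₁ : Finset X}
    (hI₁ : I₁ ⊆ S) (hJ₁ : J₁ ⊆ S.image c) :
    I₁ \ J₁.image c = rdc c (I₁ ∪ J₁) ∩ S ∧ J₁ \ I₁.image c = rdc c (I₁ ∪ J₁) \ S := by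
  constructor
  · ext x
    simp only [Finset.mem_sdiff, Finset.mem_inter, rdc, Finset.mem_filter,
      Finset.mem_union, Finset.mem_image]
    constructor
    · rintro ⟨hxI, hximg⟩
      refine ⟨⟨Or.inl hxI, ?_⟩, hI₁ hxI⟩
      rintro (h1 | h2)
      · exact Finset.disjoint_left.mp hdisj (hI₁ h1)
          (Finset.mem_image.mpr ⟨x, hI₁ hxI, rfl⟩)
      · exact hximg ⟨c x, h2, hinv x⟩
    · rintro ⟨⟨hxT, hcx⟩, hxS⟩
      have hxI : x ∈ I₁ := by
        rcases hxT with h | h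
        · exact h
        · exact (Finset.disjoint_left.mp hdisj hxS (hJ₁ h)).elim
      refine ⟨hxI, ?_⟩
      rintro ⟨y, hy, rfl⟩
      exact hcx (Or.inr (by rw [hinv y]; exact hy))
  · ext x
    simp only [Finset.mem_sdiff, rdc, Finset.mem_filter, Finset.mem_union,
      Finset.mem_image]
    constructor
    · rintro ⟨hxJ, hximg⟩
      have hxS : x ∉ S := fun hh => Finset.disjoint_left.mp hdisj hh (hJ₁ hxJ)
      refine ⟨⟨Or.inr hxJ, ?_⟩, hxS⟩
      rintro (h1 | h2)
      · exact hximg ⟨c x, h1, hinv x⟩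
      · -- c x ∈ J₁ ⊆ image c S, but also x ∈ J₁ ⊆ image c S means c x ∈ S
        obtain ⟨σ, hσ, hcσ⟩ := Finset.mem_image.mp (hJ₁ hxJ)
        have hcxS : c x ∈ S := by rw [← hcσ, hinv σ]; exact hσ
        exact Finset.disjoint_left.mp hdisj hcxS (hJ₁ h2)
    · rintro ⟨⟨hxT, hcx⟩, hxS⟩
      have hxJ : x ∈ J₁ := by
        rcases hxT with h | h
        · exact absurd (hI₁ h) hxS
        · exact h
      refine ⟨hxJ, ?_⟩
      rintro ⟨y, hy, rfl⟩
      exact hcx (Or.inl (by rw [hinv y]; exact hy))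

end P8
set_option maxHeartbeats 1000000 in
/-- Lemma 2.4 of the paper and its consequence, in the exterior-algebra model: let
`2 ≤ i ≤ g`, `I ⊆ Σ`, `J ⊆ cΣ` with `|I| + |J| = i`, and let `η ∈ Λ^{i-2}V` be the (unique,
by hard Lefschetz) element with `L^{g-i+2} ∧ η = L^{g-i+1} ∧ e_{I∪J}` (so `η` models the
Lefschetz operator `Λ = θ_{i-2} L^{g-i+1}` applied to `ω_{IJ}`). If the coefficient of
`e_{I'∪J'}` in `η` with respect to the basis `{e_T : |T| = i-2}` of `Λ^{i-2}V` is nonzero,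
then `(I, J)` and `(I', J')` have the same reduced type:
`I \ c(J) = I' \ c(J')` and `J \ c(I) = J' \ c(I')`. -/
theorem stmt10 (k X : Type*) [Field k] [CharZero k] [Fintype X] [LinearOrder X]
    (c : X → X) (hinv : Function.Involutive c) (hfree : ∀ x : X, c x ≠ x)
    (S : Finset X) (hdisj : Disjoint S (S.image c)) (hcover : S ∪ S.image c = Finset.univ)
    (g i : ℕ) (hg : g = S.card) (hi2 : 2 ≤ i) (hig : i ≤ g)
    (I J : Finset X) (hI : I ⊆ S) (hJ : J ⊆ S.image c) (hcard : I.card + J.card = i)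
    (η : ExteriorAlgebra k (X → k))
    (hη : η ∈ (LinearMap.range
        (ExteriorAlgebra.ι k : (X → k) →ₗ[k] ExteriorAlgebra k (X → k)) ^ (i - 2) :
      Submodule k (ExteriorAlgebra k (X → k))))
    (heq : Lef k c S ^ (g - i + 2) * η = Lef k c S ^ (g - i + 1) * eWedge k (I ∪ J))
    (coeff : Finset X → k)
    (hcoeff : η = ∑ T ∈ Finset.univ.filter (fun T : Finset X => T.card = i - 2),
      coeff T • eWedge k T)
    (I' J' : Finset X) (hI' : I' ⊆ S) (hJ' : J' ⊆ S.image c)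
    (hcard' : I'.card + J'.card = i - 2)
    (hne : coeff (I' ∪ J') ≠ 0) :
    I \ J.image c = I' \ J'.image c ∧ J \ I.image c = J' \ I'.image c := by
  classical
  -- Step 0: reduce to equality of reduced parts
  have hgoal : rdc c (I ∪ J) = rdc c (I' ∪ J') →
      (I \ J.image c = I' \ J'.image c ∧ J \ I.image c = J' \ I'.image c) := by
    intro h
    obtain ⟨ha1, ha2⟩ := reduced_parts hinv hdisj hI hJ
    obtain ⟨hb1, hb2⟩ := reduced_parts hinv hdisj hI' hJ'
    rw [ha1, ha2, hb1, hb2, h]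
    exact ⟨rfl, rfl⟩
  apply hgoal
  by_contra hRne
  -- Step 1: setup
  set R₀ := rdc c (I' ∪ J') with hR₀def
  set K₀ := prc c S (I' ∪ J') with hK₀def
  set p := K₀.card with hpdef
  have hred₀ : ∀ x ∈ R₀, c x ∉ R₀ := rdc_red _
  have hK₀A : K₀ ⊆ avl c S R₀ := prc_subset_avl hinv _
  have hdisj' : Disjoint I' J' := hdisj.mono hI' hJ'
  have hT'card : (I' ∪ J').card = i - 2 := by
    rw [Finset.card_union_of_disjoint hdisj', hcard']
  have hdecomp' : R₀ ∪ K₀ ∪ K₀.image c = I' ∪ J' := rdc_union_prc hinv hcover _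
  have hcard0 : R₀.card + 2 * p = i - 2 := by
    rw [← card_union_triple hinv hdisj hK₀A, hdecomp', hT'card]
  have hAcard : (avl c S R₀).card + R₀.card = S.card := card_avl hinv hdisj hcover hred₀
  -- Step 2: choice of signs
  have hsgn : ∀ K, K ∈ (avl c S R₀).powerset → ∃ ε : k, IsSgn ε ∧
      LK k c K * eWedge k R₀ = ε • eWedge k (R₀ ∪ K ∪ K.image c) := by
    intro K hKA
    have hKA' := Finset.mem_powerset.mp hKA
    exact LK_mul_eWedge hinv hfree hdisj (hKA'.trans avl_subset)
      (fun σ hσ => (avl_spec (hKA' hσ)).2.1) (fun σ hσ => (avl_spec (hKA' hσ)).2.2)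
  choose E hE1 hE2 using hsgn
  set E' : Finset X → k := fun K =>
    if h : K ∈ (avl c S R₀).powerset then E K h else 1 with hE'def
  have hE'sgn : ∀ K, IsSgn (E' K) := by
    intro K
    rw [hE'def]
    dsimp only
    split
    · exact hE1 _ _
    · exact IsSgn.one
  have hE'2 : ∀ K ∈ (avl c S R₀).powerset,
      LK k c K * eWedge k R₀ = E' K • eWedge k (R₀ ∪ K ∪ K.image c) := by
    intro K hKA
    rw [hE'def]
    dsimp only
    rw [dif_pos hKA]
    exact hE2 K hKA
  -- Step 3: the coefficient function
  set f : Finset X → k := fun K =>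
    if K ⊆ avl c S R₀ ∧ K.card = p then E' K * coeff (R₀ ∪ K ∪ K.image c) else 0
    with hfdef
  have hLev : Lev (avl c S R₀) p f := by
    intro K hK
    rw [hfdef] at hK
    dsimp only at hK
    by_cases h : K ⊆ avl c S R₀ ∧ K.card = p
    · exact h
    · rw [if_neg h] at hK
      exact absurd rfl hK
  -- Step 4: split η by reduced type
  set s0 := (Finset.univ.filter (fun T : Finset X => T.card = i - 2)).filter
      (fun T => rdc c T = R₀) with hs0
  set s1 := (Finset.univ.filter (fun T : Finset X => T.card = i - 2)).filter
      (fun T => ¬ rdc c T = R₀) with hs1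
  have hηsplit : η = (∑ T ∈ s0, coeff T • eWedge k T)
      + ∑ T ∈ s1, coeff T • eWedge k T := by
    rw [hcoeff, hs0, hs1]
    exact (Finset.sum_filter_add_sum_filter_not _ _ _).symm
  -- Step 5: the s0 part equals the Ψ-sum of f
  have hΨ : ∑ T ∈ s0, coeff T • eWedge k T
      = ∑ K ∈ (avl c S R₀).powerset, f K • (LK k c K * eWedge k R₀) := by
    rw [← Finset.sum_subset
      (Finset.filter_subset (fun K => K.card = p) (avl c S R₀).powerset)
      (fun K hK1 hK2 => ?_)]
    swap
    · -- vanishing off the filter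
      rw [Finset.mem_filter, not_and] at hK2
      have : f K = 0 := by
        rw [hfdef]
        dsimp only
        rw [if_neg]
        rintro ⟨h1, h2⟩
        exact hK2 hK1 h2
      rw [this, zero_smul]
    refine Finset.sum_nbij' (fun T => prc c S T) (fun K => R₀ ∪ K ∪ K.image c)
      ?_ ?_ ?_ ?_ ?_
    · intro T hT
      rw [hs0, Finset.mem_filter, Finset.mem_filter] at hT
      obtain ⟨⟨-, hTcard⟩, hTrd⟩ := hT
      have hprcA : prc c S T ⊆ avl c S R₀ := by
        rw [← hTrd]
        exact prc_subset_avl hinv T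
      have h1 := card_union_triple hinv hdisj (prc_subset_avl hinv T)
      rw [rdc_union_prc hinv hcover, hTrd] at h1
      rw [Finset.mem_filter]
      refine ⟨Finset.mem_powerset.mpr hprcA, ?_⟩
      show (prc c S T).card = p
      omega
    · intro K hK
      rw [Finset.mem_filter] at hK
      obtain ⟨hKp, hKcard⟩ := hK
      have hKA := Finset.mem_powerset.mp hKp
      rw [hs0, Finset.mem_filter, Finset.mem_filter]
      refine ⟨⟨Finset.mem_univ _, ?_⟩, rdc_of_union hinv hred₀ hKA⟩
      rw [card_union_triple hinv hdisj hKA]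
      omega
    · intro T hT
      rw [hs0, Finset.mem_filter, Finset.mem_filter] at hT
      rw [← hT.2]
      exact rdc_union_prc hinv hcover T
    · intro K hK
      rw [Finset.mem_filter] at hK
      exact prc_of_union hinv hdisj hred₀ (Finset.mem_powerset.mp hK.1)
    · intro T hT
      rw [hs0, Finset.mem_filter, Finset.mem_filter] at hT
      obtain ⟨⟨-, hTcard⟩, hTrd⟩ := hT
      have hprcA : prc c S T ⊆ avl c S R₀ := by
        rw [← hTrd]
        exact prc_subset_avl hinv T
      have h1 := card_union_triple hinv hdisj (prc_subset_avl hinv T)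
      rw [rdc_union_prc hinv hcover, hTrd] at h1
      have hprcp : (prc c S T).card = p := by omega
      have hunion : R₀ ∪ prc c S T ∪ (prc c S T).image c = T := by
        rw [← hTrd]
        exact rdc_union_prc hinv hcover T
      rw [hfdef]
      dsimp only
      rw [if_pos ⟨hprcA, hprcp⟩, hE'2 _ (Finset.mem_powerset.mpr hprcA), hunion,
        smul_smul]
      congr 1
      have hsq := (hE'sgn (prc c S T)).mul_self
      linear_combination (-(coeff T)) * hsq
  -- Step 6: rewrite the main equation
  have heq2 : (∑ K ∈ (avl c S R₀).powerset,
        ((Uop k (avl c S R₀))^[g-i+2] f) K • (LK k c K * eWedge k R₀))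
      + Lef k c S ^ (g-i+2) * (∑ T ∈ s1, coeff T • eWedge k T)
      = Lef k c S ^ (g-i+1) * eWedge k (I ∪ J) := by
    rw [← Lef_pow_mul_sum hinv R₀ f (g-i+2), ← hΨ, ← mul_add, ← hηsplit, heq]
  -- Step 7: extraction
  have hkey : ∀ K' ∈ (avl c S R₀).powerset, ((Uop k (avl c S R₀))^[g-i+2] f) K' = 0 := by
    intro K' hK'p
    have hK'A := Finset.mem_powerset.mp hK'p
    -- vanishing of terms of wrong reduced type
    have hvan : ∀ (n : ℕ) (T : Finset X), rdc c T ≠ R₀ →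
        lam k (R₀ ∪ K' ∪ K'.image c) (Lef k c S ^ n * eWedge k T) = 0 := by
      intro n T hTne
      obtain ⟨εT, hεT, hTdec⟩ := eWedge_decomp (k := k) hinv hfree hdisj hcover T
      rw [hTdec, mul_smul_comm, map_smul, smul_eq_mul]
      have hδ : LK k c (prc c S T) * eWedge k (rdc c T)
          = ∑ K ∈ (avl c S (rdc c T)).powerset,
              (if K = prc c S T then (1:k) else 0) • (LK k c K * eWedge k (rdc c T)) := by
        symm
        rw [Finset.sum_eq_single_of_mem (prc c S T)
          (Finset.mem_powerset.mpr (prc_subset_avl hinv T))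
          (fun K hK hne' => by rw [if_neg hne', zero_smul])]
        rw [if_pos rfl, one_smul]
      rw [hδ, Lef_pow_mul_sum hinv, map_sum]
      have hz : ∀ K ∈ (avl c S (rdc c T)).powerset,
          lam k (R₀ ∪ K' ∪ K'.image c)
            (((Uop k (avl c S (rdc c T)))^[n] fun K => if K = prc c S T then (1:k) else 0) K
              • (LK k c K * eWedge k (rdc c T))) = 0 := by
        intro K hKP
        rw [map_smul, smul_eq_mul, lam_LK_eW_ne hinv hfree hdisj _ (rdc_red T)
          (Finset.mem_powerset.mp hKP)
          (by rw [rdc_of_union hinv hred₀ hK'A]; exact hTne), mul_zero]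
      rw [Finset.sum_eq_zero hz, mul_zero]
    have h := congrArg (lam k (R₀ ∪ K' ∪ K'.image c)) heq2
    rw [map_add, map_sum] at h
    obtain ⟨ε', hε', hval'⟩ :=
      lam_LK_eW_diag (k := k) hinv hfree hdisj hred₀ hK'A hK'A
    rw [if_pos rfl] at hval'
    have hsum1 : ∑ K ∈ (avl c S R₀).powerset,
        lam k (R₀ ∪ K' ∪ K'.image c)
          (((Uop k (avl c S R₀))^[g-i+2] f) K • (LK k c K * eWedge k R₀))
        = ((Uop k (avl c S R₀))^[g-i+2] f) K' * ε' := by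
      have hz : ∀ K ∈ (avl c S R₀).powerset, K ≠ K' →
          lam k (R₀ ∪ K' ∪ K'.image c)
            (((Uop k (avl c S R₀))^[g-i+2] f) K • (LK k c K * eWedge k R₀)) = 0 := by
        intro K hKp hKne
        obtain ⟨ε, hε, hval⟩ :=
          lam_LK_eW_diag (k := k) hinv hfree hdisj hred₀ (Finset.mem_powerset.mp hKp) hK'A
        rw [map_smul, smul_eq_mul, hval, if_neg hKne, mul_zero]
      rw [Finset.sum_eq_single_of_mem K' hK'p hz, map_smul, smul_eq_mul, hval']
    have hp2 : lam k (R₀ ∪ K' ∪ K'.image c)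
        (Lef k c S ^ (g-i+2) * ∑ T ∈ s1, coeff T • eWedge k T) = 0 := by
      rw [Finset.mul_sum, map_sum]
      apply Finset.sum_eq_zero
      intro T hT
      rw [hs1, Finset.mem_filter] at hT
      rw [mul_smul_comm, map_smul, smul_eq_mul, hvan (g-i+2) T hT.2, mul_zero]
    rw [hsum1, hp2, add_zero, hvan (g-i+1) (I ∪ J) hRne] at h
    rcases mul_eq_zero.mp h with h0 | h0
    · exact h0
    · exact absurd h0 hε'.ne_zero
  -- Step 8: hard Lefschetz
  have hUzero : (Uop k (avl c S R₀))^[g-i+2] f = 0 := by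
    funext K'
    by_cases hK' : K' ⊆ avl c S R₀
    · exact hkey K' (Finset.mem_powerset.mpr hK')
    · by_contra hne0
      exact hK' ((Lev_Uop_iter hLev (g-i+2)) K' hne0).1
  have harith : 2 * p + (g - i + 2) ≤ (avl c S R₀).card := by omega
  have hf0 := HL_inj (avl c S R₀) p (g-i+2) f hLev harith hUzero
  have hfK₀ : f K₀ ≠ 0 := by
    rw [hfdef]
    dsimp only
    rw [if_pos ⟨hK₀A, rfl⟩, hdecomp']
    exact mul_ne_zero (hE'sgn K₀).ne_zero hne
  rw [hf0] at hfK₀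
  exact hfK₀ rfl
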